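/- For every α ∈ (0,1), Expected Shortfall ES_α is a coherent measure of risk on integrable random variables: it is monotone (X ≤ Y implies ES_α(Y) ≤ ES_α(X)), translation invariant (ES_α(X+c) = ES_α(X) − c), positively homogeneous (ES_α(λX) = λ·ES_α(X) for λ ≥ 0), and subadditive (ES_α(X+Y) ≤ ES_α(X) + ES_α(Y)). -/

import Mathlib

open MeasureTheory Set Filter ProbabilityTheory
open scoped Topology Pointwise

set_option linter.unusedSectionVars false
set_option linter.unusedVariables false
set_option linter.deprecated false

/-- The lower quantile function of a measure on `ℝ`. -/
noncomputable def lq (μ : Measure ℝ) (u : ℝ) : ℝ :=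
  sInf {x : ℝ | u ≤ (μ (Set.Iic x)).toReal}

/-- Expected Shortfall at level `α` of a random variable `X` on `(Ω, P)`. -/
noncomputable def ES {Ω : Type*} [MeasurableSpace Ω] (P : Measure Ω) (α : ℝ)
    (X : Ω → ℝ) : ℝ :=
  -(1 / α) * ∫ u in Set.Ioo (0:ℝ) α, lq (P.map X) u

section Helpers

variable {μ : Measure ℝ} [IsProbabilityMeasure μ] {u v : ℝ}

lemma lq_eq (μ : Measure ℝ) [IsProbabilityMeasure μ] (u : ℝ) :
    lq μ u = sInf {x : ℝ | u ≤ cdf μ x} := by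
  simp only [lq, cdf_eq_real, measureReal_def]

lemma cdfset_nonempty (hu : u < 1) : {x : ℝ | u ≤ cdf μ x}.Nonempty :=
  ((tendsto_cdf_atTop μ).eventually (eventually_ge_nhds hu)).exists

lemma cdfset_bddBelow (hu : 0 < u) : BddBelow {x : ℝ | u ≤ cdf μ x} := by
  have h := (tendsto_cdf_atBot μ).eventually (eventually_lt_nhds hu)
  obtain ⟨x0, hx0⟩ := (eventually_atBot.1 h)
  refine ⟨x0, fun y hy => ?_⟩
  by_contra hxy
  exact absurd (hy.trans ((cdf μ).mono (le_of_not_ge hxy))) (not_le.2 (hx0 x0 le_rfl))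

lemma le_cdf_lq (hu : 0 < u) (hu1 : u < 1) : u ≤ cdf μ (lq μ u) := by
  rw [lq_eq]
  set S := {x : ℝ | u ≤ cdf μ x} with hS
  set q := sInf S with hq
  refine le_of_forall_pos_le_add (fun ε hε => ?_)
  have hct : ContinuousWithinAt (cdf μ) (Ici q) q := (cdf μ).right_continuous q
  rw [Metric.continuousWithinAt_iff] at hct
  obtain ⟨δ, hδ, hδ'⟩ := hct ε hε
  obtain ⟨y, hyS, hy⟩ := Real.lt_sInf_add_pos (cdfset_nonempty hu1 (μ := μ)) hδ
  have hqy : q ≤ y := csInf_le (cdfset_bddBelow hu) hyS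
  have : dist y q < δ := by
    rw [Real.dist_eq, abs_of_nonneg (by linarith)]; linarith
  have hd := hδ' hqy this
  rw [Real.dist_eq, abs_lt] at hd
  have := hyS
  rw [mem_setOf_eq] at this
  linarith

lemma lq_le_iff (hu : 0 < u) (hu1 : u < 1) {x : ℝ} : lq μ u ≤ x ↔ u ≤ cdf μ x := by
  constructor
  · intro h
    exact (le_cdf_lq hu hu1).trans ((cdf μ).mono h)
  · intro h
    rw [lq_eq]
    exact csInf_le (cdfset_bddBelow hu) h

lemma lq_monoOn : MonotoneOn (lq μ) (Ioo (0:ℝ) 1) := by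
  intro a ha b hb hab
  rw [lq_eq, lq_eq]
  exact csInf_le_csInf (cdfset_bddBelow ha.1) (cdfset_nonempty hb.2)
    (fun x hx => le_trans hab hx)

lemma lq_aemeasurable : AEMeasurable (lq μ) (volume.restrict (Ioo (0:ℝ) 1)) :=
  aemeasurable_restrict_of_monotoneOn measurableSet_Ioo lq_monoOn

lemma lq_map (μ : Measure ℝ) [IsProbabilityMeasure μ] :
    (volume.restrict (Ioo (0:ℝ) 1)).map (lq μ) = μ := by
  have hm : AEMeasurable (lq μ) (volume.restrict (Ioo (0:ℝ) 1)) := lq_aemeasurable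
  haveI : IsProbabilityMeasure (volume.restrict (Ioo (0:ℝ) 1)) := by
    constructor
    simp [Real.volume_Ioo]
  haveI : IsProbabilityMeasure ((volume.restrict (Ioo (0:ℝ) 1)).map (lq μ)) :=
    Measure.isProbabilityMeasure_map hm
  refine Measure.ext_of_Iic _ _ (fun x => ?_)
  rw [Measure.map_apply_of_aemeasurable hm measurableSet_Iic, Measure.restrict_apply₀]
  swap
  · exact hm.nullMeasurable measurableSet_Iic
  have hset : lq μ ⁻¹' (Iic x) ∩ Ioo 0 1 = Iic (cdf μ x) ∩ Ioo 0 1 := by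
    ext u
    simp only [mem_inter_iff, mem_preimage, mem_Iic, mem_Ioo, and_congr_left_iff]
    intro hu
    rw [lq_le_iff hu.1 hu.2]
  rw [hset, ← ofReal_cdf μ x]
  rcases lt_or_eq_of_le (cdf_le_one μ x) with h1 | h1
  · have : Iic (cdf μ x) ∩ Ioo (0:ℝ) 1 = Ioc 0 (cdf μ x) := by
      ext u
      simp only [mem_inter_iff, mem_Iic, mem_Ioo, mem_Ioc]
      constructor
      · rintro ⟨h, h2, _⟩; exact ⟨h2, h⟩
      · rintro ⟨h2, h⟩; exact ⟨h, h2, lt_of_le_of_lt h h1⟩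
    rw [this, Real.volume_Ioc, sub_zero]
  · have : Iic (cdf μ x) ∩ Ioo (0:ℝ) 1 = Ioo 0 1 := by
      rw [inter_eq_right]
      intro u hu
      simp only [mem_Iic]
      rw [← h1] at hu
      exact hu.2.le
    rw [this, Real.volume_Ioo, sub_zero, ← h1]

lemma integral_lq_eq (μ : Measure ℝ) [IsProbabilityMeasure μ] {f : ℝ → ℝ}
    (hf : AEStronglyMeasurable f μ) :
    ∫ x, f x ∂μ = ∫ u in Ioo (0:ℝ) 1, f (lq μ u) := by
  conv_lhs => rw [← lq_map μ]
  rw [integral_map lq_aemeasurable (by rwa [lq_map])]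

lemma integrable_lq_iff (μ : Measure ℝ) [IsProbabilityMeasure μ] {f : ℝ → ℝ}
    (hf : AEStronglyMeasurable f μ) :
    Integrable f μ ↔ Integrable (fun u => f (lq μ u)) (volume.restrict (Ioo (0:ℝ) 1)) := by
  conv_lhs => rw [← lq_map μ]
  exact integrable_map_measure (by rwa [lq_map]) lq_aemeasurable

lemma lq_integrableOn (μ : Measure ℝ) [IsProbabilityMeasure μ]
    (hint : Integrable (fun x => x) μ) :
    IntegrableOn (lq μ) (Ioo (0:ℝ) 1) volume := by
  have := (integrable_lq_iff μ (f := fun x => x) hint.aestronglyMeasurable).1 hint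
  exact this

lemma sub_lq_integral {α : ℝ} (hα : α ∈ Ioo (0:ℝ) 1) (hint : Integrable (fun x => x) μ)
    (z : ℝ) :
    ∫ u in Ioo (0:ℝ) α, (z - lq μ u) = α * z - ∫ u in Ioo (0:ℝ) α, lq μ u := by
  have hlq : IntegrableOn (lq μ) (Ioo (0:ℝ) α) volume :=
    (lq_integrableOn μ hint).mono_set (Ioo_subset_Ioo le_rfl hα.2.le)
  rw [integral_sub (integrableOn_const (C := z) (s := Ioo (0:ℝ) α) (μ := volume) measure_Ioo_lt_top.ne) hlq]
  rw [setIntegral_const, measureReal_def, Real.volume_Ioo, sub_zero, ENNReal.toReal_ofReal hα.1.le]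
  ring_nf

lemma maxcomp_integrableOn {z : ℝ} (hint : Integrable (fun x => x) μ) :
    IntegrableOn (fun u => max (z - lq μ u) 0) (Ioo (0:ℝ) 1) volume := by
  have h : Integrable (fun x => max (z - x) 0) μ :=
    ((integrable_const z).sub hint).pos_part
  exact (integrable_lq_iff μ h.aestronglyMeasurable).1 h

lemma key_le {α : ℝ} (hα : α ∈ Ioo (0:ℝ) 1) (hint : Integrable (fun x => x) μ) (z : ℝ) :
    α * z - ∫ x, max (z - x) 0 ∂μ ≤ ∫ u in Ioo (0:ℝ) α, lq μ u := by
  have hmax : Integrable (fun x => max (z - x) 0) μ :=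
    ((integrable_const z).sub hint).pos_part
  have h1 : ∫ x, max (z - x) 0 ∂μ = ∫ u in Ioo (0:ℝ) 1, max (z - lq μ u) 0 :=
    integral_lq_eq μ hmax.aestronglyMeasurable
  have hImax : IntegrableOn (fun u => max (z - lq μ u) 0) (Ioo (0:ℝ) 1) volume :=
    maxcomp_integrableOn hint
  have hsub : Ioo (0:ℝ) α ⊆ Ioo (0:ℝ) 1 := Ioo_subset_Ioo le_rfl hα.2.le
  have h2 : ∫ u in Ioo (0:ℝ) α, max (z - lq μ u) 0 ≤ ∫ u in Ioo (0:ℝ) 1, max (z - lq μ u) 0 := by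
    refine setIntegral_mono_set hImax ?_ (HasSubset.Subset.eventuallyLE hsub)
    exact Eventually.of_forall (fun u => le_max_right _ _)
  have hlq : IntegrableOn (lq μ) (Ioo (0:ℝ) α) volume :=
    (lq_integrableOn μ hint).mono_set hsub
  have h3 : ∫ u in Ioo (0:ℝ) α, (z - lq μ u) ≤ ∫ u in Ioo (0:ℝ) α, max (z - lq μ u) 0 := by
    refine integral_mono ((integrableOn_const measure_Ioo_lt_top.ne).sub hlq)
      (hImax.mono_set hsub) (fun u => le_max_left _ _)
  rw [sub_lq_integral hα hint z] at h3
  linarith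

lemma key_eq {α : ℝ} (hα : α ∈ Ioo (0:ℝ) 1) (hint : Integrable (fun x => x) μ) :
    ∫ u in Ioo (0:ℝ) α, lq μ u = α * lq μ α - ∫ x, max (lq μ α - x) 0 ∂μ := by
  set q := lq μ α with hq
  have hmax : Integrable (fun x => max (q - x) 0) μ :=
    ((integrable_const q).sub hint).pos_part
  have h1 : ∫ x, max (q - x) 0 ∂μ = ∫ u in Ioo (0:ℝ) 1, max (q - lq μ u) 0 :=
    integral_lq_eq μ hmax.aestronglyMeasurable
  have hae : ∀ᵐ u : ℝ, u ≠ α := by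
    rw [ae_iff]
    simp only [ne_eq, not_not]
    have : {a : ℝ | a = α} = {α} := by ext u; simp
    rw [this]
    exact Real.volume_singleton
  have h2 : ∫ u in Ioo (0:ℝ) 1, max (q - lq μ u) 0
      = ∫ u in Ioo (0:ℝ) 1, (Ioo (0:ℝ) α).indicator (fun u => q - lq μ u) u := by
    refine setIntegral_congr_ae measurableSet_Ioo ?_
    filter_upwards [hae] with u hu hu1
    rcases lt_or_gt_of_ne hu with h | h
    · have huα : u ∈ Ioo (0:ℝ) α := ⟨hu1.1, h⟩
      have : lq μ u ≤ q := lq_monoOn hu1 hα h.le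
      rw [indicator_of_mem huα, max_eq_left (by linarith)]
    · have : q ≤ lq μ u := lq_monoOn hα hu1 h.le
      rw [indicator_of_notMem (by simp [mem_Ioo]; intro _; linarith), max_eq_right (by linarith)]
  have h3 : ∫ u in Ioo (0:ℝ) 1, (Ioo (0:ℝ) α).indicator (fun u => q - lq μ u) u
      = ∫ u in Ioo (0:ℝ) α, (q - lq μ u) := by
    rw [integral_indicator measurableSet_Ioo, Measure.restrict_restrict measurableSet_Ioo,
      inter_eq_left.2 (Ioo_subset_Ioo le_rfl hα.2.le)]
  rw [h1, h2, h3, sub_lq_integral hα hint q]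
  ring

lemma lq_add_const (μ : Measure ℝ) [IsProbabilityMeasure μ] {u : ℝ} (hu : u ∈ Ioo (0:ℝ) 1)
    (c : ℝ) : lq (μ.map (· + c)) u = lq μ u + c := by
  have hset : ∀ x : ℝ, (μ.map (· + c)) (Iic x) = μ (Iic (x - c)) := by
    intro x
    rw [Measure.map_apply (measurable_add_const c) measurableSet_Iic]
    congr 1
    ext y; simp [sub_eq_iff_eq_add, le_sub_iff_add_le]
  have himg : {x : ℝ | u ≤ ((μ.map (· + c)) (Iic x)).toReal}
      = (OrderIso.addRight c) '' {x : ℝ | u ≤ (μ (Iic x)).toReal} := by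
    ext x
    simp only [mem_setOf_eq, hset, Set.mem_image]
    constructor
    · intro h; exact ⟨x - c, h, sub_add_cancel x c⟩
    · rintro ⟨y, hy, rfl⟩
      show u ≤ (μ (Iic (y + c - c))).toReal
      simpa using hy
  have hne : {x : ℝ | u ≤ (μ (Iic x)).toReal}.Nonempty := by
    have := cdfset_nonempty (μ := μ) hu.2
    simpa only [cdf_eq_real, measureReal_def] using this
  have hbdd : BddBelow {x : ℝ | u ≤ (μ (Iic x)).toReal} := by
    have := cdfset_bddBelow (μ := μ) hu.1
    simpa only [cdf_eq_real, measureReal_def] using this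
  rw [lq, himg, ← OrderIso.map_csInf' _ hne hbdd]
  rfl

lemma lq_smul (μ : Measure ℝ) [IsProbabilityMeasure μ] {u : ℝ} (hu : u ∈ Ioo (0:ℝ) 1)
    {l : ℝ} (hl : 0 < l) : lq (μ.map (l * ·)) u = l * lq μ u := by
  have hset : ∀ x : ℝ, (μ.map (l * ·)) (Iic x) = μ (Iic (x / l)) := by
    intro x
    rw [Measure.map_apply (measurable_const_mul l) measurableSet_Iic]
    congr 1
    ext y
    simp only [mem_preimage, mem_Iic]
    rw [le_div_iff₀ hl, mul_comm]
  have himg : {x : ℝ | u ≤ ((μ.map (l * ·)) (Iic x)).toReal}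
      = l • {x : ℝ | u ≤ (μ (Iic x)).toReal} := by
    ext x
    rw [mem_smul_set_iff_inv_smul_mem₀ hl.ne']
    simp only [mem_setOf_eq, hset, smul_eq_mul]
    rw [inv_mul_eq_div]
  rw [lq, himg, Real.sInf_smul_of_nonneg hl.le]
  simp [lq]

lemma lqset_nonempty' (μ : Measure ℝ) [IsProbabilityMeasure μ] (hu : u < 1) :
    {x : ℝ | u ≤ (μ (Iic x)).toReal}.Nonempty := by
  have := cdfset_nonempty (μ := μ) hu
  simpa only [cdf_eq_real, measureReal_def] using this

lemma lqset_bddBelow' (μ : Measure ℝ) [IsProbabilityMeasure μ] (hu : 0 < u) :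
    BddBelow {x : ℝ | u ≤ (μ (Iic x)).toReal} := by
  have := cdfset_bddBelow (μ := μ) hu
  simpa only [cdf_eq_real, measureReal_def] using this

lemma lq_le_lq (μ ν : Measure ℝ) [IsProbabilityMeasure μ] [IsProbabilityMeasure ν]
    (h : ∀ x, ν (Iic x) ≤ μ (Iic x)) (hu : u ∈ Ioo (0:ℝ) 1) : lq μ u ≤ lq ν u := by
  refine csInf_le_csInf (lqset_bddBelow' μ hu.1) (lqset_nonempty' ν hu.2) (fun x hx => ?_)
  exact le_trans hx (ENNReal.toReal_mono (measure_ne_top μ _) (h x))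

lemma lq_dirac_zero (hu : u ∈ Ioo (0:ℝ) 1) : lq (Measure.dirac (0:ℝ)) u = 0 := by
  have hset : {x : ℝ | u ≤ ((Measure.dirac (0:ℝ)) (Iic x)).toReal} = Ici 0 := by
    ext x
    simp only [mem_setOf_eq, Measure.dirac_apply' _ measurableSet_Iic, mem_Ici]
    rcases le_or_gt 0 x with h | h
    · simp only [indicator_of_mem (mem_Iic.2 h), Pi.one_apply, ENNReal.toReal_one]
      constructor
      · intro _; exact h
      · intro _; exact hu.2.le
    · simp only [indicator_of_notMem (fun hc => (not_le.2 h) (mem_Iic.1 hc)), ENNReal.toReal_zero]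
      constructor
      · intro hc; linarith [hu.1]
      · intro hc; linarith
  rw [lq, hset, csInf_Ici]

end Helpers

/-- Expected Shortfall is a coherent measure of risk: monotone, translation invariant,
positively homogeneous and subadditive. -/
theorem expected_shortfall_coherent {Ω : Type*} [MeasurableSpace Ω]
    (P : Measure Ω) [IsProbabilityMeasure P]
    (α : ℝ) (hα : α ∈ Set.Ioo (0:ℝ) 1)
    (X Y : Ω → ℝ) (hXm : Measurable X) (hYm : Measurable Y)
    (hX : Integrable X P) (hY : Integrable Y P) :
    ((∀ ω, X ω ≤ Y ω) → ES P α Y ≤ ES P α X) ∧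
    (∀ c : ℝ, ES P α (fun ω => X ω + c) = ES P α X - c) ∧
    (∀ l : ℝ, 0 ≤ l → ES P α (fun ω => l * X ω) = l * ES P α X) ∧
    (ES P α (fun ω => X ω + Y ω) ≤ ES P α X + ES P α Y) := by
  obtain ⟨hα0, hα1⟩ := hα
  have hα0' : (0:ℝ) < 1 / α := by positivity
  have hsub : Ioo (0:ℝ) α ⊆ Ioo (0:ℝ) 1 := Ioo_subset_Ioo le_rfl hα1.le
  haveI hPX : IsProbabilityMeasure (P.map X) := Measure.isProbabilityMeasure_map hXm.aemeasurable
  haveI hPY : IsProbabilityMeasure (P.map Y) := Measure.isProbabilityMeasure_map hYm.aemeasurable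
  haveI hPZ : IsProbabilityMeasure (P.map (fun ω => X ω + Y ω)) :=
    Measure.isProbabilityMeasure_map (hXm.add hYm).aemeasurable
  have hIX : Integrable (fun x => x) (P.map X) :=
    (integrable_map_measure aestronglyMeasurable_id hXm.aemeasurable).2 hX
  have hIY : Integrable (fun x => x) (P.map Y) :=
    (integrable_map_measure aestronglyMeasurable_id hYm.aemeasurable).2 hY
  have hIZ : Integrable (fun x => x) (P.map (fun ω => X ω + Y ω)) :=
    (integrable_map_measure aestronglyMeasurable_id (hXm.add hYm).aemeasurable).2 (hX.add hY)
  have hIntX : IntegrableOn (lq (P.map X)) (Ioo (0:ℝ) α) volume :=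
    (lq_integrableOn _ hIX).mono_set hsub
  have hIntY : IntegrableOn (lq (P.map Y)) (Ioo (0:ℝ) α) volume :=
    (lq_integrableOn _ hIY).mono_set hsub
  refine ⟨?_, ?_, ?_, ?_⟩
  · -- monotonicity
    intro hXY
    have hpt : ∀ u ∈ Ioo (0:ℝ) α, lq (P.map X) u ≤ lq (P.map Y) u := by
      intro u hu
      refine lq_le_lq _ _ (fun x => ?_) (hsub hu)
      rw [Measure.map_apply hXm measurableSet_Iic, Measure.map_apply hYm measurableSet_Iic]
      exact measure_mono (fun ω h => le_trans (hXY ω) h)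
    have hint : ∫ u in Ioo (0:ℝ) α, lq (P.map X) u ≤ ∫ u in Ioo (0:ℝ) α, lq (P.map Y) u :=
      setIntegral_mono_on hIntX hIntY measurableSet_Ioo hpt
    rw [ES, ES]
    nlinarith
  · -- translation invariance
    intro c
    have hmap : P.map (fun ω => X ω + c) = (P.map X).map (· + c) :=
      (Measure.map_map (measurable_add_const c) hXm).symm
    rw [ES, ES, hmap]
    have h1 : ∫ u in Ioo (0:ℝ) α, lq ((P.map X).map (· + c)) u
        = ∫ u in Ioo (0:ℝ) α, (lq (P.map X) u + c) := by
      refine setIntegral_congr_fun measurableSet_Ioo (fun u hu => ?_)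
      exact lq_add_const _ (hsub hu) c
    rw [h1, integral_add hIntX (integrableOn_const measure_Ioo_lt_top.ne),
      setIntegral_const, measureReal_def, Real.volume_Ioo, sub_zero, ENNReal.toReal_ofReal hα0.le, smul_eq_mul]
    field_simp
    ring
  · -- positive homogeneity
    intro l hl
    rcases eq_or_lt_of_le hl with rfl | hl
    · have hmap : P.map (fun ω => (0:ℝ) * X ω) = Measure.dirac 0 := by
        have : (fun ω => (0:ℝ) * X ω) = (fun _ => (0:ℝ)) := by funext ω; ring
        rw [this, Measure.map_const, measure_univ, one_smul]
      rw [ES, hmap]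
      have h1 : ∫ u in Ioo (0:ℝ) α, lq (Measure.dirac (0:ℝ)) u = 0 := by
        rw [setIntegral_congr_fun measurableSet_Ioo
          (fun u hu => lq_dirac_zero (hsub hu))]
        simp
      rw [h1]
      ring
    · have hmap : P.map (fun ω => l * X ω) = (P.map X).map (l * ·) :=
        (Measure.map_map (measurable_const_mul l) hXm).symm
      rw [ES, ES, hmap]
      have h1 : ∫ u in Ioo (0:ℝ) α, lq ((P.map X).map (l * ·)) u
          = ∫ u in Ioo (0:ℝ) α, l * lq (P.map X) u := by
        refine setIntegral_congr_fun measurableSet_Ioo (fun u hu => ?_)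
        exact lq_smul _ (hsub hu) hl
      rw [h1, integral_const_mul]
      ring
  · -- subadditivity
    set q1 := lq (P.map X) α with hq1
    set q2 := lq (P.map Y) α with hq2
    have hposX : Integrable (fun ω => max (q1 - X ω) 0) P := by
      have h : Integrable (fun ω => q1 - X ω) P := (integrable_const q1).sub hX
      exact h.pos_part
    have hposY : Integrable (fun ω => max (q2 - Y ω) 0) P := by
      have h : Integrable (fun ω => q2 - Y ω) P := (integrable_const q2).sub hY
      exact h.pos_part
    have hposZ : Integrable (fun ω => max (q1 + q2 - (X ω + Y ω)) 0) P := by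
      have h : Integrable (fun ω => q1 + q2 - (X ω + Y ω)) P :=
        (integrable_const (q1 + q2)).sub (hX.add hY)
      exact h.pos_part
    have hk1 := key_eq (μ := P.map X) ⟨hα0, hα1⟩ hIX
    have hk2 := key_eq (μ := P.map Y) ⟨hα0, hα1⟩ hIY
    have hk3 := key_le (μ := P.map (fun ω => X ω + Y ω)) ⟨hα0, hα1⟩ hIZ (q1 + q2)
    have hA3 : ∫ w, max (q1 + q2 - w) 0 ∂(P.map (fun ω => X ω + Y ω))
        = ∫ ω, max (q1 + q2 - (X ω + Y ω)) 0 ∂P := by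
      rw [integral_map (φ := fun ω => X ω + Y ω) (hXm.add hYm).aemeasurable
        (f := fun w => max (q1 + q2 - w) 0)
        (by fun_prop : Continuous fun w : ℝ => max (q1 + q2 - w) 0).aestronglyMeasurable]
    have hA1 : ∫ x, max (q1 - x) 0 ∂(P.map X) = ∫ ω, max (q1 - X ω) 0 ∂P := by
      rw [integral_map hXm.aemeasurable (f := fun w => max (q1 - w) 0)
        (by fun_prop : Continuous fun w : ℝ => max (q1 - w) 0).aestronglyMeasurable]
    have hA2 : ∫ y, max (q2 - y) 0 ∂(P.map Y) = ∫ ω, max (q2 - Y ω) 0 ∂P := by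
      rw [integral_map hYm.aemeasurable (f := fun w => max (q2 - w) 0)
        (by fun_prop : Continuous fun w : ℝ => max (q2 - w) 0).aestronglyMeasurable]
    have hmono : ∫ ω, max (q1 + q2 - (X ω + Y ω)) 0 ∂P
        ≤ (∫ ω, max (q1 - X ω) 0 ∂P) + ∫ ω, max (q2 - Y ω) 0 ∂P := by
      rw [← integral_add hposX hposY]
      refine integral_mono hposZ (hposX.add hposY) (fun ω => ?_)
      refine max_le ?_ (add_nonneg (le_max_right _ _) (le_max_right _ _))
      have := add_le_add (le_max_left (q1 - X ω) 0) (le_max_left (q2 - Y ω) 0)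
      linarith
    rw [hA3] at hk3
    rw [hA1, ← hq1] at hk1
    rw [hA2, ← hq2] at hk2
    have hI : (∫ u in Ioo (0:ℝ) α, lq (P.map X) u) + (∫ u in Ioo (0:ℝ) α, lq (P.map Y) u)
        ≤ ∫ u in Ioo (0:ℝ) α, lq (P.map (fun ω => X ω + Y ω)) u := by
      rw [hk1, hk2]
      linarith
    rw [ES, ES, ES]
    nlinarith [mul_le_mul_of_nonneg_left hI hα0'.le]
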